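/- arXiv:2208.04589 — 6 statements merged into one kernel-verified Lean document; each statement's English description precedes it below -/
import Mathlib

section
/- Let f, g : ℝ → ℝᵏ be functions such that the components of f are linearly independent (no nonzero vector h ∈ ℝᵏ satisfies ⟨f(x), h⟩ = 0 for all x). If f' exists everywhere and for every choice of points x₁,...,x_k the vectors f'(x₁),...,f'(x_k) are linearly dependent, then there exists a nonzero h ∈ ℝᵏ and a constant c with ⟨f(x), h⟩ = c for all x. Consequently, if additionally the family (f_j)_{1≤j≤k} together with the constant function 1 is linearly independent, there exist k points x₁,...,x_k such that f'(x₁),...,f'(x_k) are linearly independent. -/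
/-- If `f : ℝ → ℝᵏ` is differentiable everywhere with derivative `f'`, its
components are linearly independent as functions, and for every choice of `k` points the
derivatives are linearly dependent, then some nontrivial linear combination of the components
of `f` is constant.  Consequently, if additionally the components of `f` together with the
constant function `1` are linearly independent, then there exist `k` points at which the
derivatives are linearly independent. -/
theorem stmt0 {k : ℕ}
    (f f' : ℝ → EuclideanSpace ℝ (Fin k))
    (hdiff : ∀ x, HasDerivAt f (f' x) x)
    (hcomp_indep : ∀ h : EuclideanSpace ℝ (Fin k),
      (∀ x, (inner ℝ (f x) h : ℝ) = 0) → h = 0)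
    (hdep : ∀ pts : Fin k → ℝ, ¬ LinearIndependent ℝ (fun i => f' (pts i))) :
    (∃ h : EuclideanSpace ℝ (Fin k), h ≠ 0 ∧ ∃ c : ℝ, ∀ x, (inner ℝ (f x) h : ℝ) = c) ∧
    ((∀ (h : EuclideanSpace ℝ (Fin k)) (a : ℝ),
        (∀ x, (inner ℝ (f x) h : ℝ) + a = 0) → h = 0 ∧ a = 0) →
      ∃ pts : Fin k → ℝ, LinearIndependent ℝ (fun i => f' (pts i))) := by
  have main : ∃ h : EuclideanSpace ℝ (Fin k), h ≠ 0 ∧ ∃ c : ℝ,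
      ∀ x, (inner ℝ (f x) h : ℝ) = c := by
    set K := Submodule.span ℝ (Set.range f') with hKdef
    by_cases hK : K = ⊤
    · exfalso
      obtain ⟨s, hsub, hspan, hli⟩ := exists_linearIndependent ℝ (Set.range f')
      have hspan' : Submodule.span ℝ s = ⊤ := by rw [hspan]; exact hK
      let b : Module.Basis s ℝ (EuclideanSpace ℝ (Fin k)) :=
        Module.Basis.mk hli (by rw [Subtype.range_coe, hspan'])
      haveI : Fintype s := FiniteDimensional.fintypeBasisIndex b
      have hcard : Fintype.card s = k := by
        have h1 := Module.finrank_eq_card_basis b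
        rw [finrank_euclideanSpace_fin] at h1
        omega
      let e := (Fintype.equivFinOfCardEq hcard).symm
      choose pt hpt using fun (v : s) => hsub v.2
      refine hdep (fun i => pt (e i)) ?_
      have heq : (fun i => f' (pt (e i)))
          = fun i => ((e i : EuclideanSpace ℝ (Fin k))) :=
        funext fun i => hpt (e i)
      rw [heq]
      exact hli.comp e e.injective
    · have hbot : Kᗮ ≠ ⊥ := fun hb => hK (Submodule.orthogonal_eq_bot_iff.mp hb)
      obtain ⟨h, hmem, hne⟩ := Submodule.exists_mem_ne_zero_of_ne_bot hbot
      have horto : ∀ x, (inner ℝ (f' x) h : ℝ) = 0 := by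
        intro x
        exact (Submodule.mem_orthogonal K h).mp hmem (f' x)
          (Submodule.subset_span ⟨x, rfl⟩)
      have hg : ∀ x, HasDerivAt (fun y => (inner ℝ (f y) h : ℝ)) 0 x := by
        intro x
        have h1 := (innerSL ℝ h).hasFDerivAt.comp_hasDerivAt x (hdiff x)
        have h2 : (innerSL ℝ h) (f' x) = 0 := by
          rw [innerSL_apply_apply, real_inner_comm]; exact horto x
        rw [h2] at h1
        have h3 : (⇑(innerSL ℝ h) ∘ f) = fun y => (inner ℝ (f y) h : ℝ) :=
          funext fun y => by
            simp only [Function.comp_apply, innerSL_apply_apply]; exact real_inner_comm _ _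
        rwa [h3] at h1
      refine ⟨h, hne, inner ℝ (f 0) h, fun x => ?_⟩
      have := is_const_of_deriv_eq_zero (f := fun y => (inner ℝ (f y) h : ℝ))
        (fun y => (hg y).differentiableAt) (fun y => (hg y).deriv) x 0
      exact this
  refine ⟨main, fun hind => ?_⟩
  obtain ⟨h, hne, c, hc⟩ := main
  exact absurd (hind h (-c) (fun x => by rw [hc x]; ring)).1 hne
end

section
/- Let λ : 𝒳 → ℝᵈ be a function and suppose there exist d+1 points x₀, x₁, ..., x_d in 𝒳 such that the d × d matrix L with columns λ(x_i) − λ(x₀), i = 1,...,d, is invertible. If g, ĝ : ℝᵖ → ℝᵈ and scalar functions a, â : 𝒳 → ℝ satisfy ⟨g(m), λ(x)⟩ + a(x) = ⟨ĝ(m), λ̂(x)⟩ + â(x) for all m and all x ∈ 𝒳 (for some λ̂ : 𝒳 → ℝᵈ), then there exist a d × d matrix A and a vector c ∈ ℝᵈ such that g(m) = A · ĝ(m) + c for all m. -/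
/-- if the matrix `L` of differences `λ(xᵢ) − λ(x₀)` is invertible and
`⟨g m, λ x⟩ + a x = ⟨ĝ m, λ̂ x⟩ + â x` for all `m, x`, then `g m = A ĝ m + c` for some matrix
`A` and vector `c`. -/
theorem stmt2 {𝒳 : Type*} {d p : ℕ}
    (lam lamhat : 𝒳 → Fin d → ℝ)
    (x : Fin (d + 1) → 𝒳)
    (L : Matrix (Fin d) (Fin d) ℝ)
    (hL : ∀ i j, L i j = lam (x j.succ) i - lam (x 0) i)
    (hLinv : IsUnit L.det)
    (g ghat : (Fin p → ℝ) → Fin d → ℝ)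
    (a ahat : 𝒳 → ℝ)
    (heq : ∀ (m : Fin p → ℝ) (xx : 𝒳),
      (∑ i, g m i * lam xx i) + a xx = (∑ i, ghat m i * lamhat xx i) + ahat xx) :
    ∃ (A : Matrix (Fin d) (Fin d) ℝ) (c : Fin d → ℝ),
      ∀ m, g m = A.mulVec (ghat m) + c := by
  set Lhat : Matrix (Fin d) (Fin d) ℝ :=
    fun i j => lamhat (x j.succ) i - lamhat (x 0) i with hLhat
  set b : Fin d → ℝ :=
    fun j => (ahat (x j.succ) - a (x j.succ)) - (ahat (x 0) - a (x 0)) with hb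
  have key : ∀ m, L.transpose.mulVec (g m) = Lhat.transpose.mulVec (ghat m) + b := by
    intro m
    funext j
    have h1 := heq m (x j.succ)
    have h0 := heq m (x 0)
    simp only [Matrix.mulVec, dotProduct, Matrix.transpose_apply, Matrix.transpose, Matrix.of_apply, Pi.add_apply,
      hL, hLhat, hb, sub_mul, Finset.sum_sub_distrib]
    simp only [mul_comm] at *
    linarith
  have hdet : IsUnit L.transpose.det := by rwa [Matrix.det_transpose]
  have hinv : L.transpose⁻¹ * L.transpose = 1 := Matrix.nonsing_inv_mul _ hdet
  refine ⟨L.transpose⁻¹ * Lhat.transpose, L.transpose⁻¹.mulVec b, fun m => ?_⟩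
  have := congrArg (L.transpose⁻¹.mulVec) (key m)
  rwa [Matrix.mulVec_mulVec, hinv, Matrix.one_mulVec, Matrix.mulVec_add,
    Matrix.mulVec_mulVec] at this
end

section
/- Let (Ω, P) be a probability space, t a Bernoulli random variable, x a random variable, and y an integrable random variable. Define the propensity score e(x) = E[t | x] and assume 0 < e(x) < 1 almost surely. If y is independent of t conditionally on x (unconfoundedness), then E[y · t / e(x)] = E[E[y | x, t = 1]] (i.e., the inverse probability weighted estimator recovers the mean of the potential outcome under treatment). -/
open MeasureTheory ProbabilityTheory

/-- Auxiliary general IPW lemma: abstract sub-σ-algebra version. -/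
theorem stmt3_aux {Ω : Type*} {m mΩ : MeasurableSpace Ω} (hm : m ≤ mΩ)
    (μ : Measure Ω) [IsProbabilityMeasure μ]
    (t y G e : Ω → ℝ)
    (ht : Measurable t)
    (hbin : ∀ ω, t ω = 0 ∨ t ω = 1)
    (hGm : StronglyMeasurable[m] G)
    (he : e =ᵐ[μ] μ[t | m])
    (hepos : ∀ᵐ ω ∂μ, 0 < e ω)
    (hGver : ∀ s : Set Ω, MeasurableSet[m] s →
      ∫ ω in s ∩ {ω | t ω = 1}, y ω ∂μ = ∫ ω in s ∩ {ω | t ω = 1}, G ω ∂μ)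
    (hyint : Integrable y μ)
    (hint1 : Integrable (fun ω => y ω * t ω / e ω) μ)
    (hint2 : Integrable G μ) :
    ∫ ω, y ω * t ω / e ω ∂μ = ∫ ω, G ω ∂μ := by
  haveI : SigmaFinite (μ.trim hm) := by
    have : IsFiniteMeasure (μ.trim hm) := isFiniteMeasure_trim hm
    infer_instance
  set e' : Ω → ℝ := μ[t | m] with he'_def
  set T : Set Ω := {ω | t ω = 1} with hT_def
  have hTm : MeasurableSet T := ht (measurableSet_singleton 1)
  have hyt_ind : ∀ ω, y ω * t ω = T.indicator y ω := by
    intro ω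
    rcases hbin ω with h | h
    · simp [Set.indicator, hT_def, h]
    · simp [Set.indicator, hT_def, h]
  have hgt_ind : ∀ ω, G ω * t ω = T.indicator G ω := by
    intro ω
    rcases hbin ω with h | h
    · simp [Set.indicator, hT_def, h]
    · simp [Set.indicator, hT_def, h]
  have hyt_int : Integrable (fun ω => y ω * t ω) μ :=
    (hyint.indicator hTm).congr (Filter.Eventually.of_forall fun ω => (hyt_ind ω).symm)
  have hgt_int : Integrable (fun ω => G ω * t ω) μ :=
    (hint2.indicator hTm).congr (Filter.Eventually.of_forall fun ω => (hgt_ind ω).symm)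
  -- key: μ[G·t | m] =ᵐ μ[y·t | m]
  have hkey : μ[fun ω => G ω * t ω | m] =ᵐ[μ] μ[fun ω => y ω * t ω | m] := by
    refine ae_eq_condExp_of_forall_setIntegral_eq hm hyt_int
      (fun s _ _ => integrable_condExp.integrableOn) (fun s hs hμs => ?_)
      stronglyMeasurable_condExp.aestronglyMeasurable
    rw [setIntegral_condExp hm hgt_int hs]
    calc ∫ ω in s, G ω * t ω ∂μ
        = ∫ ω in s, T.indicator G ω ∂μ :=
          integral_congr_ae (Filter.Eventually.of_forall fun ω => hgt_ind ω)
      _ = ∫ ω in s ∩ T, G ω ∂μ := setIntegral_indicator hTm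
      _ = ∫ ω in s ∩ T, y ω ∂μ := (hGver s hs).symm
      _ = ∫ ω in s, T.indicator y ω ∂μ := (setIntegral_indicator hTm).symm
      _ = ∫ ω in s, y ω * t ω ∂μ :=
          integral_congr_ae (Filter.Eventually.of_forall fun ω => (hyt_ind ω).symm)
  have ht_int : Integrable t μ := by
    refine (integrable_const (1 : ℝ)).mono' ht.aestronglyMeasurable (ae_of_all _ fun ω => ?_)
    rcases hbin ω with h | h <;> simp [h]
  -- pull-out: μ[G·t | m] =ᵐ G · e'
  have hpull : μ[fun ω => G ω * t ω | m] =ᵐ[μ] fun ω => G ω * e' ω :=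
    condExp_mul_of_stronglyMeasurable_left hGm (show Integrable (G * t) μ from hgt_int) ht_int
  have hce : μ[fun ω => y ω * t ω | m] =ᵐ[μ] fun ω => G ω * e' ω :=
    hkey.symm.trans hpull
  have he'pos : ∀ᵐ ω ∂μ, 0 < e' ω := by
    filter_upwards [hepos, he] with ω h1 h2
    rw [← h2]; exact h1
  have hwm : StronglyMeasurable[m] (fun ω => (e' ω)⁻¹) :=
    (stronglyMeasurable_condExp.measurable.inv).stronglyMeasurable
  have hprod : (fun ω => y ω * t ω / e ω) =ᵐ[μ] fun ω => (e' ω)⁻¹ * (y ω * t ω) := by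
    filter_upwards [he] with ω hω
    rw [hω, div_eq_mul_inv, mul_comm]
  have hw_int : Integrable (fun ω => (e' ω)⁻¹ * (y ω * t ω)) μ := hint1.congr hprod
  have hpull2 : μ[fun ω => (e' ω)⁻¹ * (y ω * t ω) | m]
      =ᵐ[μ] fun ω => (e' ω)⁻¹ * (μ[fun ω => y ω * t ω | m]) ω :=
    condExp_mul_of_stronglyMeasurable_left hwm
      (show Integrable ((fun ω => (e' ω)⁻¹) * fun ω => y ω * t ω) μ from hw_int) hyt_int
  calc ∫ ω, y ω * t ω / e ω ∂μ
      = ∫ ω, (e' ω)⁻¹ * (y ω * t ω) ∂μ := integral_congr_ae hprod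
    _ = ∫ ω, (μ[fun ω => (e' ω)⁻¹ * (y ω * t ω) | m]) ω ∂μ := (integral_condExp hm).symm
    _ = ∫ ω, G ω ∂μ := by
        refine integral_congr_ae ?_
        filter_upwards [hpull2, hce, he'pos] with ω h1 h2 h3
        rw [h1, h2, ← mul_assoc, mul_comm ((e' ω)⁻¹), mul_assoc,
          inv_mul_cancel₀ (ne_of_gt h3), mul_one]

/-- IPW identification.  With binary treatment `t`, covariates `x`, propensity
score `e` a version of `E[t | x]` with `0 < e < 1` a.s., and `y ⊥ t | x`, the inverse
probability weighted estimator recovers the mean of `E[y | x, t = 1]`: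
`E[y·t/e(x)] = E[g(x)]` where `g(x)` is a version of `E[y | x, t = 1]`. -/
theorem stmt3 {Ω 𝒳 : Type*} {mΩ : MeasurableSpace Ω} [StandardBorelSpace Ω] [Nonempty Ω]
    [MeasurableSpace 𝒳]
    (μ : Measure Ω) [IsProbabilityMeasure μ]
    (t y : Ω → ℝ) (x : Ω → 𝒳)
    (ht : Measurable t) (hy : Measurable y) (hx : Measurable x)
    (hbin : ∀ ω, t ω = 0 ∨ t ω = 1)
    (hyint : Integrable y μ)
    (e : Ω → ℝ)
    (he : e =ᵐ[μ] μ[t | MeasurableSpace.comap x inferInstance])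
    (hoverlap : ∀ᵐ ω ∂μ, 0 < e ω ∧ e ω < 1)
    (hunconf : CondIndepFun (MeasurableSpace.comap x inferInstance) hx.comap_le y t μ)
    (g : 𝒳 → ℝ) (hg : Measurable g)
    -- `g ∘ x` is a version of `E[y | x, t = 1]`:
    (hgver : ∀ A : Set 𝒳, MeasurableSet A →
      ∫ ω in x ⁻¹' A ∩ {ω | t ω = 1}, y ω ∂μ =
        ∫ ω in x ⁻¹' A ∩ {ω | t ω = 1}, g (x ω) ∂μ)
    (hint1 : Integrable (fun ω => y ω * t ω / e ω) μ)
    (hint2 : Integrable (fun ω => g (x ω)) μ) :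
    ∫ ω, y ω * t ω / e ω ∂μ = ∫ ω, g (x ω) ∂μ := by
  have hxm : Measurable[MeasurableSpace.comap x inferInstance] x := fun s hs => ⟨s, hs, rfl⟩
  refine stmt3_aux hx.comap_le μ t y (fun ω => g (x ω)) e ht hbin
    ((hg.comp hxm).stronglyMeasurable) he
    (hoverlap.mono fun ω h => h.1) ?_ hyint hint1 hint2
  rintro s ⟨A, hA, rfl⟩
  exact hgver A hA
end

section
/- Let s, ε, x, y be random variables with y independent of ε given (s, x). Let f be an injective measurable function and set m = f(s, ε). Suppose f̂ is another injective function such that f̂⁻¹ ∘ f is well-defined on the range of f; write (ŝ, ε̂) = f̂⁻¹(m). Then for all appropriate versions of conditional expectation, E[y | s, x] = E[y | s, ε, x] = E[y | m, x] = E[y | ŝ, ε̂, x] almost surely. In particular, the regression of y on the recovered latents (ŝ, ε̂) and covariates x equals the regression on the true latents s and x. -/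
open MeasureTheory ProbabilityTheory

section Aux

lemma comap_le_comap_of_comp {Ω α β : Type*} [MeasurableSpace α] [MeasurableSpace β]
    {u : Ω → α} {v : Ω → β} {ψ : β → α} (hψ : Measurable ψ) (h : ∀ ω, u ω = ψ (v ω)) :
    MeasurableSpace.comap u inferInstance ≤ MeasurableSpace.comap v inferInstance := by
  have huv : u = ψ ∘ v := funext h
  rw [huv, ← MeasurableSpace.comap_comp]
  exact MeasurableSpace.comap_mono hψ.comap_le

/-- Key lemma: under conditional independence of `y` and `ε` given `m'`, the conditional
expectation `μ[y|m']` has the same integral as `y` over sets of the form `A ∩ ε ⁻¹' C`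
with `A ∈ m'` and `C` measurable. -/
lemma setIntegral_condexp_inter_preimage
    {Ω E : Type*} {m' : MeasurableSpace Ω} {mΩ : MeasurableSpace Ω} [StandardBorelSpace Ω]
    [MeasurableSpace E] (hm' : m' ≤ mΩ) (μ : Measure Ω) [IsProbabilityMeasure μ]
    {y : Ω → ℝ} {ε : Ω → E} (hy : Measurable y) (hε : Measurable ε)
    (hyint : Integrable y μ)
    (hci : CondIndepFun m' hm' y ε μ)
    {A : Set Ω} (hA : MeasurableSet[m'] A) {C : Set E} (hC : MeasurableSet C) :
    ∫ ω in A ∩ ε ⁻¹' C, y ω ∂μ = ∫ ω in A ∩ ε ⁻¹' C, (μ[y|m']) ω ∂μ := by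
  have hεC : MeasurableSet (ε ⁻¹' C) := hε hC
  have hAΩ : MeasurableSet A := hm' _ hA
  have hymc : AEStronglyMeasurable[MeasurableSpace.comap y inferInstance] y μ :=
    StronglyMeasurable.aestronglyMeasurable
      (Measurable.stronglyMeasurable (fun _ h => ⟨_, h, rfl⟩))
  rw [← memLp_one_iff_integrable] at hyint
  set D : Set Ω := A ∩ ε ⁻¹' C with hD
  refine MemLp.induction_stronglyMeasurable (μ := μ) hy.comap_le ENNReal.one_ne_top
    (fun u => ∫ ω in D, u ω ∂μ = ∫ ω in D, (μ[u|m']) ω ∂μ) ?_ ?_ ?_ ?_ hyint hymc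
  · -- indicator case
    rintro c T ⟨t, ht, rfl⟩ -
    have hTm : MeasurableSet (y ⁻¹' t) := hy ht
    -- reduce to the `c = 1` statement
    have hone : ∫ ω in D, Set.indicator (y ⁻¹' t) (fun _ => (1 : ℝ)) ω ∂μ
        = ∫ ω in D, (μ⟦y ⁻¹' t|m'⟧) ω ∂μ := by
      have hmul : (μ⟦y ⁻¹' t ∩ ε ⁻¹' C | m'⟧)
          =ᵐ[μ] fun ω => (μ⟦y ⁻¹' t|m'⟧) ω * (μ⟦ε ⁻¹' C|m'⟧) ω :=
        ((condIndepFun_iff_condExp_inter_preimage_eq_mul hy hε).mp hci) t C ht hC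
      set w : Ω → ℝ := μ⟦y ⁻¹' t|m'⟧ with hw
      set gc : Ω → ℝ := Set.indicator (ε ⁻¹' C) (fun _ => (1 : ℝ)) with hgc
      have hwg : w * gc = Set.indicator (ε ⁻¹' C) w := by
        funext ω
        by_cases hωC : ω ∈ ε ⁻¹' C <;> simp [hgc, hωC]
      have hwint : Integrable w μ := integrable_condExp
      have hwgint : Integrable (w * gc) μ := by
        rw [hwg]; exact hwint.indicator hεC
      have hgcint : Integrable gc μ := (integrable_const (1 : ℝ)).indicator hεC
      have hpull : μ[w * gc|m'] =ᵐ[μ] w * μ[gc|m'] :=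
        condExp_mul_of_stronglyMeasurable_left stronglyMeasurable_condExp hwgint hgcint
      calc ∫ ω in D, Set.indicator (y ⁻¹' t) (fun _ => (1 : ℝ)) ω ∂μ
          = (μ (D ∩ y ⁻¹' t)).toReal := by
            rw [setIntegral_indicator hTm, setIntegral_const, smul_eq_mul, mul_one, measureReal_def]
        _ = (μ (A ∩ (y ⁻¹' t ∩ ε ⁻¹' C))).toReal := by
            rw [hD, Set.inter_assoc, Set.inter_comm (ε ⁻¹' C)]
        _ = ∫ ω in A, Set.indicator (y ⁻¹' t ∩ ε ⁻¹' C) (fun _ => (1 : ℝ)) ω ∂μ := by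
            rw [setIntegral_indicator (hTm.inter hεC), setIntegral_const, smul_eq_mul, mul_one, measureReal_def]
        _ = ∫ ω in A, (μ⟦y ⁻¹' t ∩ ε ⁻¹' C|m'⟧) ω ∂μ :=
            (setIntegral_condExp hm' ((integrable_const (1 : ℝ)).indicator (hTm.inter hεC)) hA).symm
        _ = ∫ ω in A, w ω * (μ⟦ε ⁻¹' C|m'⟧) ω ∂μ :=
            integral_congr_ae (ae_restrict_of_ae hmul)
        _ = ∫ ω in A, (μ[w * gc|m']) ω ∂μ := by
            refine (integral_congr_ae (ae_restrict_of_ae ?_)).symm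
            filter_upwards [hpull] with ω hω using hω
        _ = ∫ ω in A, (w * gc) ω ∂μ := setIntegral_condExp hm' hwgint hA
        _ = ∫ ω in A, Set.indicator (ε ⁻¹' C) w ω ∂μ := by rw [hwg]
        _ = ∫ ω in D, w ω ∂μ := by rw [setIntegral_indicator hεC]
    -- now scale by `c`
    have hcs : Set.indicator (y ⁻¹' t) (fun _ => c)
        = c • Set.indicator (y ⁻¹' t) (fun _ => (1 : ℝ)) := by
      funext ω; by_cases hω : ω ∈ y ⁻¹' t <;> simp [hω]
    rw [hcs]
    have hsm : μ[c • Set.indicator (y ⁻¹' t) (fun _ => (1 : ℝ))|m']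
        =ᵐ[μ] c • (μ⟦y ⁻¹' t|m'⟧) := condExp_smul c _ _
    rw [integral_congr_ae (ae_restrict_of_ae hsm)]
    simp only [Pi.smul_apply, smul_eq_mul]
    rw [integral_const_mul, integral_const_mul, hone]
  · -- additivity
    intro u v hdisj huint hvint hum hvm hu hv
    have hui : Integrable u μ := memLp_one_iff_integrable.mp huint
    have hvi : Integrable v μ := memLp_one_iff_integrable.mp hvint
    have hadd : μ[u + v|m'] =ᵐ[μ] μ[u|m'] + μ[v|m'] := condExp_add hui hvi _
    rw [integral_congr_ae (ae_restrict_of_ae hadd)]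
    simp only [Pi.add_apply]
    rw [integral_add hui.integrableOn hvi.integrableOn,
      integral_add integrable_condExp.integrableOn integrable_condExp.integrableOn, hu, hv]
  · -- closedness
    have cont1 : Continuous fun u : lpMeas ℝ ℝ (MeasurableSpace.comap y inferInstance) 1 μ =>
        ∫ ω in D, (u : Ω → ℝ) ω ∂μ := by
      have heq : (fun u : lpMeas ℝ ℝ (MeasurableSpace.comap y inferInstance) 1 μ =>
          ∫ ω in D, (u : Ω → ℝ) ω ∂μ)
          = (fun v : Lp ℝ 1 μ => ∫ ω in D, v ω ∂μ) ∘ (Submodule.subtypeL _) := by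
        funext u
        refine integral_congr_ae (ae_restrict_of_ae ?_)
        simp_rw [Submodule.coe_subtypeL', Submodule.coe_subtype]
        exact Filter.Eventually.of_forall fun _ => trivial
      rw [heq]
      exact (continuous_setIntegral _).comp (ContinuousLinearMap.continuous _)
    have cont2 : Continuous fun u : lpMeas ℝ ℝ (MeasurableSpace.comap y inferInstance) 1 μ =>
        ∫ ω in D, (μ[(u : Ω → ℝ)|m']) ω ∂μ := by
      have heq : (fun u : lpMeas ℝ ℝ (MeasurableSpace.comap y inferInstance) 1 μ =>
          ∫ ω in D, (μ[(u : Ω → ℝ)|m']) ω ∂μ)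
          = (fun v : Lp ℝ 1 μ => ∫ ω in D, v ω ∂μ) ∘ (condExpL1CLM ℝ hm' μ)
            ∘ (Submodule.subtypeL _) := by
        funext u
        have hint : Integrable ((u : Lp ℝ 1 μ) : Ω → ℝ) μ := L1.integrable_coeFn _
        have h1 : μ[((u : Lp ℝ 1 μ) : Ω → ℝ)|m']
            =ᵐ[μ] condExpL1CLM ℝ hm' μ (hint.toL1 _) := condExp_ae_eq_condExpL1CLM hm' hint
        rw [Integrable.toL1_coeFn _ hint] at h1
        exact integral_congr_ae (ae_restrict_of_ae h1)
      rw [heq]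
      exact ((continuous_setIntegral _).comp (ContinuousLinearMap.continuous _)).comp
        (ContinuousLinearMap.continuous _)
    exact isClosed_eq cont1 cont2
  · -- a.e. invariance
    intro u v huv huint hu
    have h1 : ∫ ω in D, u ω ∂μ = ∫ ω in D, v ω ∂μ :=
      integral_congr_ae (ae_restrict_of_ae huv)
    have h2 : μ[u|m'] =ᵐ[μ] μ[v|m'] := condExp_congr_ae huv
    rw [← h1, hu]
    exact integral_congr_ae (ae_restrict_of_ae h2)

end Aux

/-- with `y ⊥ ε | (s, x)`, `m = f(s, ε)` for injective `f` (with measurable left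
inverse), and recovered latents `(ŝ, ε̂) = f̂⁻¹(m)` for an injective `f̂` with measurable
inverse satisfying `f̂(f̂⁻¹(f p)) = f p`, the conditional expectations coincide:
`E[y | s, x] = E[y | s, ε, x] = E[y | m, x] = E[y | ŝ, ε̂, x]` a.s. -/
theorem stmt4 {Ω S E X S' E' M : Type*}
    {mΩ : MeasurableSpace Ω} [StandardBorelSpace Ω] [Nonempty Ω]
    [MeasurableSpace S] [MeasurableSpace E] [MeasurableSpace X]
    [MeasurableSpace S'] [MeasurableSpace E'] [MeasurableSpace M]
    (μ : Measure Ω) [IsProbabilityMeasure μ]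
    (s : Ω → S) (ε : Ω → E) (x : Ω → X) (y : Ω → ℝ)
    (hs : Measurable s) (hε : Measurable ε) (hx : Measurable x) (hy : Measurable y)
    (hyint : Integrable y μ)
    (f : S × E → M) (hf : Measurable f) (hfinj : Function.Injective f)
    (g : M → S × E) (hg : Measurable g) (hgf : ∀ p, g (f p) = p)
    (fhat : S' × E' → M) (hfhat : Measurable fhat) (hfhatinj : Function.Injective fhat)
    (fhinv : M → S' × E') (hfhinv : Measurable fhinv)
    (hleft : ∀ p : S × E, fhat (fhinv (f p)) = f p)
    (m : Ω → M) (hm : ∀ ω, m ω = f (s ω, ε ω))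
    (shat : Ω → S') (εhat : Ω → E') (hse : ∀ ω, (shat ω, εhat ω) = fhinv (m ω))
    (hci : CondIndepFun (MeasurableSpace.comap (fun ω => (s ω, x ω)) inferInstance)
      ((hs.prodMk hx).comap_le) y ε μ) :
    (μ[y | MeasurableSpace.comap (fun ω => (s ω, x ω)) inferInstance]
      =ᵐ[μ] μ[y | MeasurableSpace.comap (fun ω => (s ω, ε ω, x ω)) inferInstance]) ∧
    (μ[y | MeasurableSpace.comap (fun ω => (s ω, ε ω, x ω)) inferInstance]
      =ᵐ[μ] μ[y | MeasurableSpace.comap (fun ω => (m ω, x ω)) inferInstance]) ∧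
    (μ[y | MeasurableSpace.comap (fun ω => (m ω, x ω)) inferInstance]
      =ᵐ[μ] μ[y | MeasurableSpace.comap (fun ω => (shat ω, εhat ω, x ω)) inferInstance]) := by
  have hm' : (MeasurableSpace.comap (fun ω => (s ω, x ω)) inferInstance) ≤ mΩ :=
    (hs.prodMk hx).comap_le
  -- the auxiliary combined map
  set z : Ω → (S × X) × E := fun ω => ((s ω, x ω), ε ω) with hz_def
  have hz : Measurable z := (hs.prodMk hx).prodMk hε
  -- σ-algebra identifications
  have eq1 : MeasurableSpace.comap (fun ω => (s ω, ε ω, x ω)) inferInstance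
      = MeasurableSpace.comap z inferInstance := by
    refine le_antisymm ?_ ?_
    · exact comap_le_comap_of_comp
        (ψ := fun p : (S × X) × E => (p.1.1, p.2, p.1.2))
        (by fun_prop) (fun ω => rfl)
    · exact comap_le_comap_of_comp
        (ψ := fun p : S × E × X => ((p.1, p.2.2), p.2.1))
        (by fun_prop) (fun ω => rfl)
  have eq2 : MeasurableSpace.comap (fun ω => (s ω, ε ω, x ω)) inferInstance
      = MeasurableSpace.comap (fun ω => (m ω, x ω)) inferInstance := by
    refine le_antisymm ?_ ?_
    · refine comap_le_comap_of_comp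
        (ψ := fun p : M × X => ((g p.1).1, (g p.1).2, p.2)) (by fun_prop) (fun ω => ?_)
      simp [hm ω, hgf]
    · refine comap_le_comap_of_comp
        (ψ := fun p : S × E × X => (f (p.1, p.2.1), p.2.2)) (by fun_prop) (fun ω => ?_)
      simp [hm ω]
  have hfhat_m : ∀ ω, fhat (shat ω, εhat ω) = m ω := by
    intro ω
    rw [hse ω, hm ω, hleft]
  have eq3 : MeasurableSpace.comap (fun ω => (m ω, x ω)) inferInstance
      = MeasurableSpace.comap (fun ω => (shat ω, εhat ω, x ω)) inferInstance := by
    refine le_antisymm ?_ ?_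
    · refine comap_le_comap_of_comp
        (ψ := fun p : S' × E' × X => (fhat (p.1, p.2.1), p.2.2)) (by fun_prop) (fun ω => ?_)
      simp [hfhat_m ω]
    · refine comap_le_comap_of_comp
        (ψ := fun p : M × X => ((fhinv p.1).1, (fhinv p.1).2, p.2)) (by fun_prop) (fun ω => ?_)
      have h1 : shat ω = (fhinv (m ω)).1 := congrArg Prod.fst (hse ω)
      have h2 : εhat ω = (fhinv (m ω)).2 := congrArg Prod.snd (hse ω)
      simp [h1, h2]
  refine ⟨?_, by rw [eq2], by rw [eq3]⟩
  rw [eq1]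
  -- main conditional-independence step
  have hm'le : (MeasurableSpace.comap (fun ω => (s ω, x ω)) inferInstance)
      ≤ MeasurableSpace.comap z inferInstance :=
    comap_le_comap_of_comp (ψ := Prod.fst) measurable_fst (fun ω => rfl)
  refine ae_eq_condExp_of_forall_setIntegral_eq hz.comap_le hyint
    (fun t _ _ => integrable_condExp.integrableOn) ?_
    ((stronglyMeasurable_condExp.mono hm'le).aestronglyMeasurable)
  rintro t ⟨D, hD, rfl⟩ -
  suffices h : ∀ D : Set ((S × X) × E), MeasurableSet D → ∫ ω in z ⁻¹' D, y ω ∂μ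
      = ∫ ω in z ⁻¹' D,
        (μ[y|MeasurableSpace.comap (fun ω => (s ω, x ω)) inferInstance]) ω ∂μ from
    (h D hD).symm
  intro D hD
  refine MeasurableSpace.induction_on_inter
    (C := fun T _ => ∫ ω in z ⁻¹' T, y ω ∂μ
      = ∫ ω in z ⁻¹' T,
        (μ[y|MeasurableSpace.comap (fun ω => (s ω, x ω)) inferInstance]) ω ∂μ)
    generateFrom_prod.symm isPiSystem_prod ?_ ?_ ?_ ?_ D hD
  · simp
  · rintro T ⟨B, hB, C, hC, rfl⟩
    have hpre : z ⁻¹' (B ×ˢ C) = (fun ω => (s ω, x ω)) ⁻¹' B ∩ ε ⁻¹' C := by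
      ext ω; simp [hz_def, Set.mem_prod]
    rw [hpre]
    exact setIntegral_condexp_inter_preimage hm' μ hy hε hyint hci ⟨B, hB, rfl⟩ hC
  · intro T hT ih
    have hpc : z ⁻¹' Tᶜ = (z ⁻¹' T)ᶜ := rfl
    have hTz : MeasurableSet (z ⁻¹' T) := hz hT
    have h1 : ∫ ω in z ⁻¹' T, y ω ∂μ + ∫ ω in (z ⁻¹' T)ᶜ, y ω ∂μ = ∫ ω, y ω ∂μ :=
      integral_add_compl hTz hyint
    have h2 : ∫ ω in z ⁻¹' T,
          (μ[y|MeasurableSpace.comap (fun ω => (s ω, x ω)) inferInstance]) ω ∂μ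
        + ∫ ω in (z ⁻¹' T)ᶜ,
          (μ[y|MeasurableSpace.comap (fun ω => (s ω, x ω)) inferInstance]) ω ∂μ
        = ∫ ω, (μ[y|MeasurableSpace.comap (fun ω => (s ω, x ω)) inferInstance]) ω ∂μ :=
      integral_add_compl hTz integrable_condExp
    have h3 : ∫ ω, (μ[y|MeasurableSpace.comap (fun ω => (s ω, x ω)) inferInstance]) ω ∂μ
        = ∫ ω, y ω ∂μ := integral_condExp hm'
    rw [hpc]
    linarith
  · intro F hdisj hFm ih
    have hpu : z ⁻¹' (⋃ i, F i) = ⋃ i, z ⁻¹' F i := by simp [Set.preimage_iUnion]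
    have hmeas : ∀ i, MeasurableSet (z ⁻¹' F i) := fun i => hz (hFm i)
    have hdisj' : Pairwise (Function.onFun Disjoint fun i => z ⁻¹' F i) :=
      fun i j hij => Disjoint.preimage z (hdisj hij)
    rw [hpu, integral_iUnion hmeas hdisj' hyint.integrableOn,
      integral_iUnion hmeas hdisj' integrable_condExp.integrableOn]
    exact tsum_congr ih
end

section
/- Let (y, s, x, t) be random variables with t ∈ {0,1}, propensity e(x) = E[t | x] satisfying 0 < e(x) < 1 a.s., potential outcomes y(0), y(1) with y = t·y(1) + (1−t)·y(0), unconfoundedness (y(0), y(1)) ⊥ t | x, and surrogacy y ⊥ t | (s, x). Define h(s, x) = E[y | s, x]. Then E[y(1) − y(0)] = E[h(s, x) · t / e(x) − h(s, x) · (1−t)/(1−e(x))]. -/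
open MeasureTheory ProbabilityTheory


lemma bin_integrable {Ω : Type*} {mΩ : MeasurableSpace Ω} {μ : Measure Ω} [IsFiniteMeasure μ]
    {t : Ω → ℝ} (ht : Measurable t)
    (hbin : ∀ ω, t ω = 0 ∨ t ω = 1) : Integrable t μ := by
  refine (integrable_const (1 : ℝ)).mono' ht.aestronglyMeasurable ?_
  refine Filter.Eventually.of_forall fun ω => ?_
  rcases hbin ω with h | h <;> simp [h]

lemma aux_condexp_sup {Ω : Type*} {m' mΩ : MeasurableSpace Ω} [StandardBorelSpace Ω]
    {μ : Measure Ω} [IsFiniteMeasure μ] (hm' : m' ≤ mΩ)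
    {f t : Ω → ℝ} (hf : Measurable f) (ht : Measurable t)
    (hbin : ∀ ω, t ω = 0 ∨ t ω = 1)
    (hindep : CondIndepFun m' hm' f t μ) :
    μ[t | m' ⊔ MeasurableSpace.comap f inferInstance] =ᵐ[μ] μ[t | m'] := by
  have hMle : m' ⊔ MeasurableSpace.comap f inferInstance ≤ mΩ := sup_le hm' hf.comap_le
  have hintt : Integrable t μ := bin_integrable ht hbin
  -- the generating π-system
  set P : Set (Set Ω) :=
    {u | ∃ a, MeasurableSet[m'] a ∧ ∃ b : Set ℝ, MeasurableSet b ∧ u = a ∩ f ⁻¹' b} with hP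
  have hgen : m' ⊔ MeasurableSpace.comap f inferInstance = MeasurableSpace.generateFrom P := by
    refine le_antisymm (sup_le ?_ ?_) (MeasurableSpace.generateFrom_le ?_)
    · intro a ha
      exact MeasurableSpace.measurableSet_generateFrom
        ⟨a, ha, Set.univ, MeasurableSet.univ, by simp⟩
    · rintro u ⟨b, hb, rfl⟩
      exact MeasurableSpace.measurableSet_generateFrom
        ⟨Set.univ, MeasurableSet.univ, b, hb, by simp⟩
    · rintro u ⟨a, ha, b, hb, rfl⟩
      exact MeasurableSet.inter ((le_sup_left : m' ≤ m' ⊔ MeasurableSpace.comap f inferInstance) a ha)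
        ((le_sup_right : MeasurableSpace.comap f inferInstance ≤ m' ⊔ MeasurableSpace.comap f inferInstance) _ ⟨b, hb, rfl⟩)
  have hpi : IsPiSystem P := by
    rintro u ⟨a1, ha1, b1, hb1, rfl⟩ v ⟨a2, ha2, b2, hb2, rfl⟩ -
    refine ⟨a1 ∩ a2, ha1.inter ha2, b1 ∩ b2, hb1.inter hb2, ?_⟩
    ext ω; simp [Set.mem_inter_iff]; tauto
  -- indicator representation of t
  set T : Set Ω := t ⁻¹' {1} with hT
  have hTmeas : MeasurableSet[mΩ] T := ht (measurableSet_singleton 1)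
  have ht_eq : t = T.indicator (fun _ => (1 : ℝ)) := by
    funext ω
    rcases hbin ω with h | h
    · have : ω ∉ T := by simp [hT, Set.mem_preimage, h]
      simp [this, h]
    · have : ω ∈ T := by simp [hT, Set.mem_preimage, h]
      simp [this, h]
  -- the key set-integral identity
  have hkey : ∀ u, MeasurableSet[m' ⊔ MeasurableSpace.comap f inferInstance] u →
      ∫ ω in u, (μ[t|m']) ω ∂μ = ∫ ω in u, t ω ∂μ := by
    intro u hu
    refine MeasurableSpace.induction_on_inter (m := m' ⊔ MeasurableSpace.comap f inferInstance)
      (C := fun u _ => ∫ ω in u, (μ[t|m']) ω ∂μ = ∫ ω in u, t ω ∂μ)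
      hgen hpi (by simp) ?_ ?_ ?_ _ hu
    · -- basic sets
      rintro u ⟨a, ha, b, hb, rfl⟩
      have hamΩ : MeasurableSet[mΩ] a := hm' a ha
      have hbmΩ : MeasurableSet[mΩ] (f ⁻¹' b) := hf hb
      have hcond := (condIndepFun_iff_condExp_inter_preimage_eq_mul (hm' := hm') (μ := μ)
        hf ht).mp hindep b {1} hb (measurableSet_singleton 1)
      have hind_int : Integrable ((f ⁻¹' b ∩ T).indicator fun _ => (1:ℝ)) μ :=
        (integrable_const (1:ℝ)).indicator (hbmΩ.inter hTmeas)
      have hBint : Integrable ((f ⁻¹' b).indicator fun _ => (1:ℝ)) μ :=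
        (integrable_const (1:ℝ)).indicator hbmΩ
      have hprod_int : Integrable
          (fun ω => ((f ⁻¹' b).indicator (fun _ => (1:ℝ)) ω) * (μ[t|m']) ω) μ := by
        refine (integrable_condExp.bdd_mul (c := 1)
          (hBint.aestronglyMeasurable) ?_)
        refine Filter.Eventually.of_forall fun ω => ?_
        by_cases hω : ω ∈ f ⁻¹' b <;> simp [hω]
      calc ∫ ω in a ∩ f ⁻¹' b, (μ[t|m']) ω ∂μ
          = ∫ ω in a, (f ⁻¹' b).indicator (μ[t|m']) ω ∂μ := by
            rw [setIntegral_indicator hbmΩ]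
        _ = ∫ ω in a, ((f ⁻¹' b).indicator (fun _ => (1:ℝ)) ω) * (μ[t|m']) ω ∂μ := by
            refine setIntegral_congr_ae hamΩ (Filter.Eventually.of_forall fun ω _ => ?_)
            by_cases hω : ω ∈ f ⁻¹' b <;> simp [hω]
        _ = ∫ ω in a, (μ[(fun ω => ((f ⁻¹' b).indicator (fun _ => (1:ℝ)) ω) * (μ[t|m']) ω)|m']) ω ∂μ :=
            (setIntegral_condExp hm' hprod_int ha).symm
        _ = ∫ ω in a, ((μ[(f ⁻¹' b).indicator (fun _ => (1:ℝ))|m']) ω * (μ[t|m']) ω) ∂μ := by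
            refine setIntegral_congr_ae hamΩ ?_
            have hpull := condExp_mul_of_stronglyMeasurable_left (μ := μ) (m := m')
              (f := μ[t|m']) (g := (f ⁻¹' b).indicator (fun _ => (1:ℝ)))
              stronglyMeasurable_condExp
              (hprod_int.congr (Filter.Eventually.of_forall fun ω => by
                simp [Pi.mul_apply, mul_comm]))
              hBint
            have h2 := condExp_congr_ae (μ := μ) (m := m')
              (f := fun ω => ((f ⁻¹' b).indicator (fun _ => (1:ℝ)) ω) * (μ[t|m']) ω)
              (g := (μ[t|m']) * ((f ⁻¹' b).indicator fun _ => (1:ℝ)))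
              (Filter.Eventually.of_forall fun ω => by simp [Pi.mul_apply, mul_comm])
            filter_upwards [h2, hpull] with ω h2ω hω _
            rw [h2ω, hω]; simp [Pi.mul_apply, mul_comm]
        _ = ∫ ω in a, ((μ[(f ⁻¹' b).indicator (fun _ => (1:ℝ))|m']) ω
              * (μ[T.indicator (fun _ => (1:ℝ))|m']) ω) ∂μ := by
            rw [← ht_eq]
        _ = ∫ ω in a, (μ[(f ⁻¹' b ∩ T).indicator (fun _ => (1:ℝ))|m']) ω ∂μ := by
            refine setIntegral_congr_ae hamΩ ?_
            filter_upwards [hcond] with ω hω _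
            simpa using hω.symm
        _ = ∫ ω in a, ((f ⁻¹' b ∩ T).indicator (fun _ => (1:ℝ))) ω ∂μ :=
            setIntegral_condExp hm' hind_int ha
        _ = ∫ ω in a ∩ f ⁻¹' b, t ω ∂μ := by
            rw [ht_eq, ← setIntegral_indicator hbmΩ]
            refine setIntegral_congr_ae hamΩ (Filter.Eventually.of_forall fun ω _ => ?_)
            rw [← Set.indicator_indicator]
    · -- complement
      intro u huM hu
      have humΩ : MeasurableSet[mΩ] u := hMle u huM
      have h1 := integral_add_compl humΩ (integrable_condExp (μ := μ) (f := t) (m := m'))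
      have h2 := integral_add_compl humΩ hintt
      have h3 : ∫ ω, (μ[t|m']) ω ∂μ = ∫ ω, t ω ∂μ := integral_condExp hm' (f := t) (μ := μ)
      linarith
    · -- countable disjoint unions
      intro g hdisj hgM hg
      have hgmΩ : ∀ i, MeasurableSet[mΩ] (g i) := fun i => hMle _ (hgM i)
      rw [integral_iUnion hgmΩ hdisj integrable_condExp.integrableOn,
        integral_iUnion hgmΩ hdisj hintt.integrableOn]
      exact tsum_congr hg
  -- conclude by uniqueness of conditional expectation
  exact (ae_eq_condExp_of_forall_setIntegral_eq hMle hintt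
    (fun s _ _ => integrable_condExp.integrableOn)
    (fun s hs _ => hkey s hs)
    ((stronglyMeasurable_condExp.mono (le_sup_left : m' ≤ m' ⊔ MeasurableSpace.comap f inferInstance)).aestronglyMeasurable)).symm

lemma aux_condexp_mul {Ω : Type*} {m' mΩ : MeasurableSpace Ω} [StandardBorelSpace Ω]
    {μ : Measure Ω} [IsFiniteMeasure μ] (hm' : m' ≤ mΩ)
    {f t : Ω → ℝ} (hf : Measurable f) (ht : Measurable t)
    (hbin : ∀ ω, t ω = 0 ∨ t ω = 1) (hfi : Integrable f μ)
    (hindep : CondIndepFun m' hm' f t μ) :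
    μ[fun ω => f ω * t ω | m'] =ᵐ[μ] fun ω => (μ[f|m']) ω * (μ[t|m']) ω := by
  have hMle : m' ⊔ MeasurableSpace.comap f inferInstance ≤ mΩ := sup_le hm' hf.comap_le
  have hm'M : m' ≤ m' ⊔ MeasurableSpace.comap f inferInstance := le_sup_left
  have hintt : Integrable t μ := bin_integrable ht hbin
  have hintft : Integrable (f * t) μ := by
    refine hfi.bdd_mul (c := 1) ht.aestronglyMeasurable ?_ |>.congr ?_
    · exact Filter.Eventually.of_forall fun ω => by rcases hbin ω with h | h <;> simp [h]
    · exact Filter.Eventually.of_forall fun ω => by simp [Pi.mul_apply, mul_comm]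
  have hfM : StronglyMeasurable[m' ⊔ MeasurableSpace.comap f inferInstance] f :=
    ((Measurable.of_comap_le le_rfl).stronglyMeasurable).mono le_sup_right
  have hsup := aux_condexp_sup hm' hf ht hbin hindep
  have hbd : ∀ᵐ ω ∂μ, ‖(μ[t|m']) ω‖ ≤ 1 := by
    have h0 : 0 ≤ᵐ[μ] μ[t|m'] :=
      condExp_nonneg (Filter.Eventually.of_forall fun ω => by
        rcases hbin ω with h | h <;> simp [h])
    have h1 : μ[t|m'] ≤ᵐ[μ] μ[fun _ => (1:ℝ)|m'] :=
      condExp_mono hintt (integrable_const 1)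
        (Filter.Eventually.of_forall fun ω => by rcases hbin ω with h | h <;> simp [h])
    rw [condExp_const hm'] at h1
    filter_upwards [h0, h1] with ω h0ω h1ω
    simp only [Pi.zero_apply] at h0ω
    rw [Real.norm_eq_abs, abs_le]
    exact ⟨by linarith, h1ω⟩
  have hint2 : Integrable ((μ[t|m']) * f) μ :=
    hfi.bdd_mul (stronglyMeasurable_condExp.mono hm').aestronglyMeasurable hbd
  calc μ[fun ω => f ω * t ω | m']
      =ᵐ[μ] μ[μ[f * t | m' ⊔ MeasurableSpace.comap f inferInstance] | m'] :=
        (condExp_condExp_of_le hm'M hMle).symm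
    _ =ᵐ[μ] μ[f * μ[t | m' ⊔ MeasurableSpace.comap f inferInstance] | m'] :=
        condExp_congr_ae (condExp_mul_of_stronglyMeasurable_left hfM hintft hintt)
    _ =ᵐ[μ] μ[(μ[t|m']) * f | m'] := by
        refine condExp_congr_ae ?_
        filter_upwards [hsup] with ω hω
        simp [Pi.mul_apply, hω, mul_comm]
    _ =ᵐ[μ] (μ[t|m']) * μ[f|m'] :=
        condExp_mul_of_stronglyMeasurable_left stronglyMeasurable_condExp hint2 hfi
    _ = fun ω => (μ[f|m']) ω * (μ[t|m']) ω := by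
        funext ω; simp [Pi.mul_apply, mul_comm]

lemma aux_arm {Ω : Type*} {G H mΩ : MeasurableSpace Ω} [StandardBorelSpace Ω]
    {μ : Measure Ω} [IsProbabilityMeasure μ]
    (hG : G ≤ mΩ) (hH : H ≤ mΩ) (hGH : G ≤ H)
    {y Y τ ρ ε : Ω → ℝ}
    (hy : Measurable y) (hY : Measurable Y) (hτ : Measurable τ)
    (hbin : ∀ ω, τ ω = 0 ∨ τ ω = 1)
    (hsurr : CondIndepFun H hH y τ μ)
    (hunconf : CondIndepFun G hG Y τ μ)
    (hyY : ∀ ω, y ω * τ ω = τ ω * Y ω)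
    (hρ : ρ =ᵐ[μ] μ[y | H])
    (hε : ε =ᵐ[μ] μ[τ | G])
    (hεne : ∀ᵐ ω ∂μ, ε ω ≠ 0)
    (hinty : Integrable y μ) (hintY : Integrable Y μ)
    (hint : Integrable (fun ω => ρ ω * τ ω / ε ω) μ) :
    ∫ ω, ρ ω * τ ω / ε ω ∂μ = ∫ ω, Y ω ∂μ := by
  have hintτ : Integrable τ μ := bin_integrable hτ hbin
  -- the H-measurable weight
  set k : Ω → ℝ := fun ω => (μ[y|H]) ω * ((μ[τ|G]) ω)⁻¹ with hk
  have hkSM : StronglyMeasurable[H] k :=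
    stronglyMeasurable_condExp.mul
      ((stronglyMeasurable_condExp.mono hGH).measurable.inv.stronglyMeasurable)
  have eq0 : (fun ω => ρ ω * τ ω / ε ω) =ᵐ[μ] fun ω => k ω * τ ω := by
    filter_upwards [hρ, hε] with ω h1 h2
    rw [hk]; dsimp only; rw [h1, h2, div_eq_mul_inv]; ring
  have hintk : Integrable (fun ω => k ω * τ ω) μ := hint.congr eq0
  have pull1 : μ[k * τ|H] =ᵐ[μ] k * μ[τ|H] :=
    condExp_mul_of_stronglyMeasurable_left hkSM
      (hintk.congr (Filter.Eventually.of_forall fun ω => rfl)) hintτ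
  have surrprod := aux_condexp_mul hH hy hτ hbin hinty hsurr
  have congr_yτ : (fun ω => y ω * τ ω) = fun ω => τ ω * Y ω := funext hyY
  rw [congr_yτ] at surrprod
  have chainEq : μ[k * τ|H] =ᵐ[μ]
      fun ω => ((μ[τ|G]) ω)⁻¹ * (μ[fun ω => τ ω * Y ω|H]) ω := by
    refine pull1.trans ?_
    filter_upwards [surrprod] with ω hω
    rw [Pi.mul_apply, hω, hk]; ring
  have hF2int : Integrable (fun ω => ((μ[τ|G]) ω)⁻¹ * (μ[fun ω => τ ω * Y ω|H]) ω) μ :=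
    integrable_condExp.congr chainEq
  have pull2 : μ[(fun ω => ((μ[τ|G]) ω)⁻¹) * μ[fun ω => τ ω * Y ω|H]|G] =ᵐ[μ]
      (fun ω => ((μ[τ|G]) ω)⁻¹) * μ[μ[fun ω => τ ω * Y ω|H]|G] :=
    condExp_mul_of_stronglyMeasurable_left
      (stronglyMeasurable_condExp.measurable.inv.stronglyMeasurable)
      (hF2int.congr (Filter.Eventually.of_forall fun ω => rfl)) integrable_condExp
  have tower : μ[μ[fun ω => τ ω * Y ω|H]|G] =ᵐ[μ] μ[fun ω => τ ω * Y ω|G] :=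
    condExp_condExp_of_le hGH hH
  have unconfprod := aux_condexp_mul hG hY hτ hbin hintY hunconf
  have unconfprod' : μ[fun ω => τ ω * Y ω|G] =ᵐ[μ]
      fun ω => (μ[Y|G]) ω * (μ[τ|G]) ω := by
    refine Filter.EventuallyEq.trans ?_ unconfprod
    exact condExp_congr_ae (Filter.Eventually.of_forall fun ω => mul_comm _ _)
  have hεne' : ∀ᵐ ω ∂μ, (μ[τ|G]) ω ≠ 0 := by
    filter_upwards [hε, hεne] with ω h1 h2
    rw [← h1]; exact h2
  have final : μ[(fun ω => ((μ[τ|G]) ω)⁻¹) * μ[fun ω => τ ω * Y ω|H]|G] =ᵐ[μ] μ[Y|G] := by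
    refine pull2.trans ?_
    filter_upwards [tower, unconfprod', hεne'] with ω h1 h2 h3
    rw [Pi.mul_apply, h1, h2]
    field_simp
  calc ∫ ω, ρ ω * τ ω / ε ω ∂μ
      = ∫ ω, k ω * τ ω ∂μ := integral_congr_ae eq0
    _ = ∫ ω, (μ[k * τ|H]) ω ∂μ := (integral_condExp hH (f := k * τ) (μ := μ)).symm
    _ = ∫ ω, ((μ[τ|G]) ω)⁻¹ * (μ[fun ω => τ ω * Y ω|H]) ω ∂μ := integral_congr_ae chainEq
    _ = ∫ ω, (μ[(fun ω => ((μ[τ|G]) ω)⁻¹) * μ[fun ω => τ ω * Y ω|H]|G]) ω ∂μ :=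
        (integral_condExp hG (μ := μ)).symm
    _ = ∫ ω, (μ[Y|G]) ω ∂μ := integral_congr_ae final
    _ = ∫ ω, Y ω ∂μ := integral_condExp hG (f := Y) (μ := μ)

/-- long-term causal effect identification via surrogates: under overlap,
unconfoundedness, and surrogacy (`y ⊥ t | (s, x)`), with `h(s,x)` a version of `E[y | s, x]`,
the ATE satisfies `E[y(1) − y(0)] = E[h(s,x)·t/e(x) − h(s,x)·(1−t)/(1−e(x))]`. -/
theorem stmt5 {Ω X S : Type*} {mΩ : MeasurableSpace Ω} [StandardBorelSpace Ω] [Nonempty Ω]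
    [MeasurableSpace X] [MeasurableSpace S]
    (μ : Measure Ω) [IsProbabilityMeasure μ]
    (t y y0 y1 : Ω → ℝ) (x : Ω → X) (s : Ω → S)
    (ht : Measurable t) (hy : Measurable y) (hx : Measurable x) (hs : Measurable s)
    (hy0 : Measurable y0) (hy1 : Measurable y1)
    (hbin : ∀ ω, t ω = 0 ∨ t ω = 1)
    (hobs : ∀ ω, y ω = t ω * y1 ω + (1 - t ω) * y0 ω)
    (e : Ω → ℝ)
    (he : e =ᵐ[μ] μ[t | MeasurableSpace.comap x inferInstance])
    (hoverlap : ∀ᵐ ω ∂μ, 0 < e ω ∧ e ω < 1)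
    (hunconf : CondIndepFun (MeasurableSpace.comap x inferInstance) hx.comap_le
      (fun ω => (y0 ω, y1 ω)) t μ)
    (hsurr : CondIndepFun (MeasurableSpace.comap (fun ω => (s ω, x ω)) inferInstance)
      ((hs.prodMk hx).comap_le) y t μ)
    (h : S × X → ℝ) (hh : Measurable h)
    (hhver : (fun ω => h (s ω, x ω)) =ᵐ[μ]
      μ[y | MeasurableSpace.comap (fun ω => (s ω, x ω)) inferInstance])
    (hint0 : Integrable y0 μ) (hint1 : Integrable y1 μ) (hinty : Integrable y μ)
    (hintw : Integrable (fun ω =>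
      h (s ω, x ω) * t ω / e ω - h (s ω, x ω) * (1 - t ω) / (1 - e ω)) μ) :
    ∫ ω, (y1 ω - y0 ω) ∂μ =
      ∫ ω, (h (s ω, x ω) * t ω / e ω - h (s ω, x ω) * (1 - t ω) / (1 - e ω)) ∂μ := by
  have hGH : MeasurableSpace.comap x inferInstance ≤
      MeasurableSpace.comap (fun ω => (s ω, x ω)) inferInstance := by
    rintro _ ⟨b, hb, rfl⟩
    exact ⟨(Set.univ : Set S) ×ˢ b, MeasurableSet.univ.prod hb, by ext ω; simp⟩
  have hintt : Integrable t μ := bin_integrable ht hbin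
  -- integrability of the two pieces
  have eqA : (fun ω => h (s ω, x ω) * t ω / e ω) = fun ω =>
      (h (s ω, x ω) * t ω / e ω - h (s ω, x ω) * (1 - t ω) / (1 - e ω)) * t ω := by
    funext ω; rcases hbin ω with h' | h' <;> simp [h']
  have eqB : (fun ω => h (s ω, x ω) * (1 - t ω) / (1 - e ω)) = fun ω =>
      (h (s ω, x ω) * t ω / e ω - h (s ω, x ω) * (1 - t ω) / (1 - e ω)) * (t ω - 1) := by
    funext ω; rcases hbin ω with h' | h' <;> simp [h'] <;> ring
  have hintA : Integrable (fun ω => h (s ω, x ω) * t ω / e ω) μ := by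
    rw [eqA]
    refine (hintw.bdd_mul (c := 1) ht.aestronglyMeasurable ?_).congr
      (Filter.Eventually.of_forall fun ω => mul_comm _ _)
    exact Filter.Eventually.of_forall fun ω => by rcases hbin ω with h' | h' <;> simp [h']
  have hintB : Integrable (fun ω => h (s ω, x ω) * (1 - t ω) / (1 - e ω)) μ := by
    rw [eqB]
    refine (hintw.bdd_mul (c := 1) ((ht.sub measurable_const).aestronglyMeasurable) ?_).congr
      (Filter.Eventually.of_forall fun ω => mul_comm _ _)
    exact Filter.Eventually.of_forall fun ω => by rcases hbin ω with h' | h' <;> simp [h']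
  -- arm A
  have armA : ∫ ω, h (s ω, x ω) * t ω / e ω ∂μ = ∫ ω, y1 ω ∂μ := by
    refine aux_arm hx.comap_le ((hs.prodMk hx).comap_le) hGH hy hy1 ht hbin hsurr
      ?_ ?_ hhver he ?_ hinty hint1 hintA
    · exact hunconf.comp measurable_snd measurable_id
    · intro ω; rw [hobs ω]; rcases hbin ω with h' | h' <;> rw [h'] <;> ring
    · exact hoverlap.mono fun ω hω => ne_of_gt hω.1
  -- arm B
  have armB : ∫ ω, h (s ω, x ω) * (1 - t ω) / (1 - e ω) ∂μ = ∫ ω, y0 ω ∂μ := by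
    have hεB : (fun ω => 1 - e ω) =ᵐ[μ]
        μ[fun ω => 1 - t ω | MeasurableSpace.comap x inferInstance] := by
      have hsub := condExp_sub (μ := μ) (m := MeasurableSpace.comap x inferInstance)
        (f := fun _ => (1:ℝ)) (g := t) (integrable_const 1) hintt
      rw [condExp_const hx.comap_le] at hsub
      refine Filter.EventuallyEq.symm ?_
      refine Filter.EventuallyEq.trans (Filter.EventuallyEq.of_eq rfl) (hsub.trans ?_)
      filter_upwards [he] with ω hω
      simp [Pi.sub_apply, hω]
    refine aux_arm hx.comap_le ((hs.prodMk hx).comap_le) hGH hy hy0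
      (measurable_const.sub ht) ?_ ?_ ?_ ?_ hhver hεB ?_ hinty hint0 hintB
    · intro ω; rcases hbin ω with h' | h' <;> [right; left] <;> rw [h'] <;> norm_num
    · exact hsurr.comp measurable_id (measurable_const.sub measurable_id)
    · exact hunconf.comp measurable_fst (measurable_const.sub measurable_id)
    · intro ω; rw [hobs ω]; rcases hbin ω with h' | h' <;> rw [h'] <;> ring
    · exact hoverlap.mono fun ω hω => sub_ne_zero_of_ne (ne_of_lt hω.2).symm
  calc ∫ ω, (y1 ω - y0 ω) ∂μ
      = ∫ ω, y1 ω ∂μ - ∫ ω, y0 ω ∂μ := integral_sub hint1 hint0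
    _ = ∫ ω, h (s ω, x ω) * t ω / e ω ∂μ
        - ∫ ω, h (s ω, x ω) * (1 - t ω) / (1 - e ω) ∂μ := by rw [armA, armB]
    _ = ∫ ω, (h (s ω, x ω) * t ω / e ω - h (s ω, x ω) * (1 - t ω) / (1 - e ω)) ∂μ :=
        (integral_sub hintA hintB).symm
end

section
/- Suppose random variables satisfy: (i) comparability, p_obs(y | x, s) = p_exp(y | x, s) (the conditional law of y given (x, s) is the same under two measures P_obs and P_exp); and (ii) surrogacy under P_exp, y ⊥ t | (s, x). Then the conditional mean function h(s, x) = E_obs[y | s, x], learnable from observational data, satisfies E_exp[y | s, x, t] = h(s, x) P_exp-almost surely. -/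
open MeasureTheory ProbabilityTheory Set

/-- Key step: under conditional independence of `y` and `t` given `m1`, the integrals of `y`
and of `μ[y | m1]` agree on sets of the form `A1 ∩ t ⁻¹' C` with `A1` `m1`-measurable. -/
theorem stmt13_key {Ω T : Type*} {m1 : MeasurableSpace Ω} {mΩ : MeasurableSpace Ω}
    [StandardBorelSpace Ω] [Nonempty Ω] [MeasurableSpace T]
    (hm1 : m1 ≤ mΩ) {μ : Measure Ω} [IsProbabilityMeasure μ] {t : Ω → T} {y : Ω → ℝ}
    (ht : Measurable t) (hy : Measurable y) (hyint : Integrable y μ)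
    (hsurr : CondIndepFun m1 hm1 y t μ)
    (A1 : Set Ω) (hA1 : MeasurableSet[m1] A1) (C : Set T) (hC : MeasurableSet C) :
    ∫ ω in A1 ∩ t ⁻¹' C, (μ[y | m1]) ω ∂μ = ∫ ω in A1 ∩ t ⁻¹' C, y ω ∂μ := by
  have hA1' : MeasurableSet A1 := hm1 _ hA1
  have hA2 : MeasurableSet (t ⁻¹' C) := ht hC
  set κe := condExpKernel μ m1 with hκedef
  have hprod : ∀ᵐ ω ∂μ, ∀ q : ℚ, κe ω (y ⁻¹' Iic (q : ℝ) ∩ t ⁻¹' C)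
      = κe ω (y ⁻¹' Iic (q : ℝ)) * κe ω (t ⁻¹' C) := by
    rw [ae_all_iff]
    intro q
    exact ae_eq_of_ae_eq_trim
      (Kernel.IndepFun.measure_inter_preimage_eq_mul hsurr _ _ measurableSet_Iic hC)
  have hintg : ∀ᵐ ω ∂μ, ∫ z in t ⁻¹' C, y z ∂ (κe ω)
      = (κe ω (t ⁻¹' C)).toReal * ∫ z, y z ∂ (κe ω) := by
    filter_upwards [hprod] with ω hω
    haveI : IsFiniteMeasure (((κe ω).restrict (t ⁻¹' C)).map y) := by
      constructor
      rw [Measure.map_apply hy MeasurableSet.univ]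
      exact measure_lt_top _ _
    have hmeq : ((κe ω).restrict (t ⁻¹' C)).map y = κe ω (t ⁻¹' C) • ((κe ω).map y) := by
      refine ext_of_generate_finite _
        ((BorelSpace.measurable_eq (α := ℝ)).trans Real.borel_eq_generateFrom_Iic_rat)
        Real.isPiSystem_Iic_rat ?_ ?_
      · intro u hu
        simp only [mem_iUnion, mem_singleton_iff] at hu
        obtain ⟨q, rfl⟩ := hu
        rw [Measure.map_apply hy measurableSet_Iic,
          Measure.restrict_apply (hy measurableSet_Iic),
          Measure.smul_apply, Measure.map_apply hy measurableSet_Iic, smul_eq_mul,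
          hω q, mul_comm]
      · rw [Measure.map_apply hy MeasurableSet.univ, preimage_univ,
          Measure.restrict_apply_univ, Measure.smul_apply,
          Measure.map_apply hy MeasurableSet.univ, preimage_univ, measure_univ, smul_eq_mul,
          mul_one]
    calc ∫ z in t ⁻¹' C, y z ∂ (κe ω)
        = ∫ z, id z ∂ (((κe ω).restrict (t ⁻¹' C)).map y) := by
          rw [integral_map hy.aemeasurable aestronglyMeasurable_id]
          simp only [id_eq]
      _ = ∫ z, id z ∂ (κe ω (t ⁻¹' C) • ((κe ω).map y)) := by rw [hmeq]
      _ = (κe ω (t ⁻¹' C)).toReal * ∫ z, id z ∂ ((κe ω).map y) := by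
          rw [integral_smul_measure, smul_eq_mul]
      _ = (κe ω (t ⁻¹' C)).toReal * ∫ z, y z ∂ (κe ω) := by
          rw [integral_map hy.aemeasurable aestronglyMeasurable_id]
          simp only [id_eq]
  -- left side
  have hindy : Integrable ((t ⁻¹' C).indicator y) μ := hyint.indicator hA2
  have e3 : μ[(t ⁻¹' C).indicator y | m1] =ᵐ[μ]
      fun ω => (κe ω (t ⁻¹' C)).toReal * ∫ z, y z ∂ (κe ω) := by
    refine (condExp_ae_eq_integral_condExpKernel hm1 hindy).trans ?_
    filter_upwards [hintg] with ω hω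
    rw [integral_indicator hA2]
    exact hω
  have eL : ∫ ω in A1 ∩ t ⁻¹' C, y ω ∂μ
      = ∫ ω in A1, (κe ω (t ⁻¹' C)).toReal * ∫ z, y z ∂ (κe ω) ∂μ := by
    rw [← setIntegral_indicator hA2, ← setIntegral_condExp hm1 hindy hA1]
    exact setIntegral_congr_ae hA1' (e3.mono fun ω hω _ => hω)
  -- right side
  have hone : Integrable ((t ⁻¹' C).indicator (fun _ => (1 : ℝ))) μ :=
    (integrable_const 1).indicator hA2
  have hmul : (μ[y | m1]) * (t ⁻¹' C).indicator (fun _ => (1 : ℝ))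
      = (t ⁻¹' C).indicator (μ[y | m1]) := by
    funext ω
    by_cases hω : ω ∈ t ⁻¹' C <;> simp [Set.indicator_apply, hω]
  have hindg : Integrable ((t ⁻¹' C).indicator (μ[y | m1])) μ :=
    integrable_condExp.indicator hA2
  have hsm : StronglyMeasurable[m1] (μ[y | m1]) := stronglyMeasurable_condExp
  have e5 : μ[(t ⁻¹' C).indicator (μ[y | m1]) | m1] =ᵐ[μ]
      fun ω => (κe ω (t ⁻¹' C)).toReal * ∫ z, y z ∂ (κe ω) := by
    have hfg : Integrable ((μ[y | m1]) * (t ⁻¹' C).indicator (fun _ => (1 : ℝ))) μ := by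
      rw [hmul]; exact hindg
    have hpull := condExp_mul_of_stronglyMeasurable_left (μ := μ) hsm hfg hone
    rw [hmul] at hpull
    refine hpull.trans ?_
    have hker := condExpKernel_ae_eq_condExp (μ := μ) hm1 hA2
    have hgker := condExp_ae_eq_integral_condExpKernel hm1 hyint
    filter_upwards [hker, hgker] with ω h1 h2
    simp only [Pi.mul_apply]
    rw [h2, ← h1, mul_comm]; rfl
  have eR : ∫ ω in A1 ∩ t ⁻¹' C, (μ[y | m1]) ω ∂μ
      = ∫ ω in A1, (κe ω (t ⁻¹' C)).toReal * ∫ z, y z ∂ (κe ω) ∂μ := by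
    rw [← setIntegral_indicator hA2, ← setIntegral_condExp hm1 hindg hA1]
    exact setIntegral_congr_ae hA1' (e5.mono fun ω hω _ => hω)
  rw [eL, eR]

/-- Extension of `stmt13_key` from rectangles to the whole σ-algebra generated by
`(s, x, t)`. -/
theorem stmt13_main {Ω S X T : Type*} {m1 : MeasurableSpace Ω} {mΩ : MeasurableSpace Ω}
    [StandardBorelSpace Ω] [Nonempty Ω]
    [MeasurableSpace X] [MeasurableSpace S] [MeasurableSpace T]
    (hm1 : m1 ≤ mΩ) {μ : Measure Ω} [IsProbabilityMeasure μ]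
    {x : Ω → X} {s : Ω → S} {t : Ω → T} {y : Ω → ℝ}
    (hx : Measurable x) (hs : Measurable s) (ht : Measurable t) (hy : Measurable y)
    (hyint : Integrable y μ)
    (hm1eq : m1 = MeasurableSpace.comap (fun ω => (s ω, x ω)) inferInstance)
    (hsurr : CondIndepFun m1 hm1 y t μ) :
    ∀ B : Set (S × X × T), MeasurableSet B →
      ∫ ω in (fun ω => (s ω, x ω, t ω)) ⁻¹' B, (μ[y | m1]) ω ∂μ
        = ∫ ω in (fun ω => (s ω, x ω, t ω)) ⁻¹' B, y ω ∂μ := by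
  have hmapm : Measurable (fun ω => (s ω, x ω, t ω)) := hs.prodMk (hx.prodMk ht)
  have hgen : (inferInstance : MeasurableSpace (S × X × T)) = MeasurableSpace.generateFrom
      (image2 (· ×ˢ ·) {u : Set S | MeasurableSet u}
        (image2 (· ×ˢ ·) {u : Set X | MeasurableSet u} {u : Set T | MeasurableSet u})) := by
    refine (generateFrom_eq_prod MeasurableSpace.generateFrom_measurableSet generateFrom_prod
      isCountablySpanning_measurableSet ?_).symm
    exact isCountablySpanning_measurableSet.prod isCountablySpanning_measurableSet
  refine MeasurableSpace.induction_on_inter hgen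
    (MeasurableSpace.isPiSystem_measurableSet.prod
      (MeasurableSpace.isPiSystem_measurableSet.prod MeasurableSpace.isPiSystem_measurableSet)) ?_ ?_ ?_ ?_
  · simp
  · rintro u ⟨D1, hD1, v, ⟨D2, hD2, D3, hD3, rfl⟩, rfl⟩
    have hpre : (fun ω => (s ω, x ω, t ω)) ⁻¹' (D1 ×ˢ D2 ×ˢ D3)
        = ((fun ω => (s ω, x ω)) ⁻¹' (D1 ×ˢ D2)) ∩ t ⁻¹' D3 := by
      ext ω
      simp [and_assoc]
    rw [hpre]
    refine stmt13_key hm1 ht hy hyint hsurr _ ?_ _ hD3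
    rw [hm1eq]
    exact MeasurableSpace.measurableSet_comap.mpr ⟨D1 ×ˢ D2, hD1.prod hD2, rfl⟩
  · intro u hu ihu
    have hpu : MeasurableSet ((fun ω => (s ω, x ω, t ω)) ⁻¹' u) := hmapm hu
    rw [preimage_compl]
    have h1 := integral_add_compl hpu (integrable_condExp (f := y) (m := m1) (μ := μ))
    have h2 := integral_add_compl hpu hyint
    have h3 : ∫ ω, (μ[y | m1]) ω ∂μ = ∫ ω, y ω ∂μ := integral_condExp hm1
    linarith
  · intro f hdisj hmeas ihf
    rw [preimage_iUnion,
      integral_iUnion (fun i => hmapm (hmeas i))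
        (hdisj.mono fun _ _ hij => hij.preimage _) integrable_condExp.integrableOn,
      integral_iUnion (fun i => hmapm (hmeas i))
        (hdisj.mono fun _ _ hij => hij.preimage _) hyint.integrableOn]
    exact tsum_congr ihf

/-- under comparability (the conditional distribution of `y` given `(x, s)` is
the same under `μobs` and `μexp`) and surrogacy under `μexp` (`y ⊥ t | (s, x)`), the
observational regression function `h(s,x) = E_obs[y | s, x]` is a version of
`E_exp[y | s, x, t]`. -/
theorem stmt13 {Ω X S T : Type*} {mΩ : MeasurableSpace Ω} [StandardBorelSpace Ω] [Nonempty Ω]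
    [MeasurableSpace X] [MeasurableSpace S] [MeasurableSpace T]
    (μobs μexp : Measure Ω) [IsProbabilityMeasure μobs] [IsProbabilityMeasure μexp]
    (x : Ω → X) (s : Ω → S) (t : Ω → T) (y : Ω → ℝ)
    (hx : Measurable x) (hs : Measurable s) (ht : Measurable t) (hy : Measurable y)
    (hyobs : Integrable y μobs) (hyexp : Integrable y μexp)
    -- comparability: the regular conditional distributions of `y` given `(x, s)` agree
    (hcomp : condDistrib y (fun ω => (x ω, s ω)) μobs
      = condDistrib y (fun ω => (x ω, s ω)) μexp)
    -- the experimental covariate–surrogate distribution is dominated by the observational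
    -- one (so that the common conditional distribution is meaningful on the experimental data)
    (hac : μexp.map (fun ω => (x ω, s ω)) ≪ μobs.map (fun ω => (x ω, s ω)))
    -- surrogacy under the experimental measure
    (hsurr : CondIndepFun (MeasurableSpace.comap (fun ω => (s ω, x ω)) inferInstance)
      ((hs.prodMk hx).comap_le) y t μexp)
    (h : S × X → ℝ) (hh : Measurable h)
    -- `h(s,x)` is a version of `E_obs[y | s, x]`
    (hhver : (fun ω => h (s ω, x ω)) =ᵐ[μobs]
      μobs[y | MeasurableSpace.comap (fun ω => (s ω, x ω)) inferInstance]) :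
    (fun ω => h (s ω, x ω)) =ᵐ[μexp]
      μexp[y | MeasurableSpace.comap (fun ω => (s ω, x ω, t ω)) inferInstance] := by
  have hm1 : MeasurableSpace.comap (fun ω => (s ω, x ω)) inferInstance ≤ mΩ :=
    (hs.prodMk hx).comap_le
  have hm3 : MeasurableSpace.comap (fun ω => (s ω, x ω, t ω)) inferInstance ≤ mΩ :=
    (hs.prodMk (hx.prodMk ht)).comap_le
  have hm13 : MeasurableSpace.comap (fun ω => (s ω, x ω)) inferInstance ≤
      MeasurableSpace.comap (fun ω => (s ω, x ω, t ω)) inferInstance := by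
    have hcomp2 : (fun ω => (s ω, x ω)) =
        (fun p : S × X × T => (p.1, p.2.1)) ∘ (fun ω => (s ω, x ω, t ω)) := rfl
    rw [hcomp2, ← MeasurableSpace.comap_comp]
    exact MeasurableSpace.comap_mono
      (measurable_fst.prodMk (measurable_fst.comp measurable_snd)).comap_le
  -- the σ-algebra generated by `(x, s)` is the same as the one generated by `(s, x)`
  have heq : MeasurableSpace.comap (fun ω => (x ω, s ω)) inferInstance
      = MeasurableSpace.comap (fun ω => (s ω, x ω)) inferInstance := by
    apply le_antisymm
    · intro u hu
      obtain ⟨B, hB, rfl⟩ := MeasurableSpace.measurableSet_comap.mp hu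
      exact MeasurableSpace.measurableSet_comap.mpr ⟨Prod.swap ⁻¹' B, measurable_swap hB, rfl⟩
    · intro u hu
      obtain ⟨B, hB, rfl⟩ := MeasurableSpace.measurableSet_comap.mp hu
      exact MeasurableSpace.measurableSet_comap.mpr ⟨Prod.swap ⁻¹' B, measurable_swap hB, rfl⟩
  have hxs : Measurable (fun ω => (x ω, s ω)) := hx.prodMk hs
  -- Step A: the regression function is a version of `E_exp[y | s, x]`
  have hGm : StronglyMeasurable
      (fun p : X × S => ∫ z, z ∂ (condDistrib y (fun ω => (x ω, s ω)) μobs) p) :=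
    ((measurable_snd : Measurable fun p : (X × S) × ℝ =>
      p.2).stronglyMeasurable).integral_kernel_prod_right'
  have hAobs : (fun ω => h (s ω, x ω)) =ᵐ[μobs]
      fun ω => ∫ z, z ∂ (condDistrib y (fun ω => (x ω, s ω)) μobs) (x ω, s ω) := by
    refine hhver.trans ?_
    rw [← heq]
    exact condExp_ae_eq_integral_condDistrib' hxs hyobs
  have hmeasG : MeasurableSet
      {p : X × S | h (p.2, p.1) = ∫ z, z ∂ (condDistrib y (fun ω => (x ω, s ω)) μobs) p} :=
    measurableSet_eq_fun (hh.comp measurable_swap) hGm.measurable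
  have hae_map : ∀ᵐ p ∂ (μobs.map (fun ω => (x ω, s ω))),
      h (p.2, p.1) = ∫ z, z ∂ (condDistrib y (fun ω => (x ω, s ω)) μobs) p :=
    (ae_map_iff hxs.aemeasurable hmeasG).2 hAobs
  have hae_exp : ∀ᵐ ω ∂ μexp,
      h (s ω, x ω) = ∫ z, z ∂ (condDistrib y (fun ω => (x ω, s ω)) μobs) (x ω, s ω) :=
    ae_of_ae_map hxs.aemeasurable (hae_map.filter_mono hac.ae_le)
  have hAexp : (fun ω => h (s ω, x ω)) =ᵐ[μexp]
      μexp[y | MeasurableSpace.comap (fun ω => (s ω, x ω)) inferInstance] := by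
    have h5 : μexp[y | MeasurableSpace.comap (fun ω => (s ω, x ω)) inferInstance] =ᵐ[μexp]
        fun ω => ∫ z, z ∂ (condDistrib y (fun ω => (x ω, s ω)) μobs) (x ω, s ω) := by
      rw [← heq, hcomp]
      exact condExp_ae_eq_integral_condDistrib' hxs hyexp
    exact Filter.EventuallyEq.trans hae_exp h5.symm
  -- conclude
  have hmapm : Measurable (fun ω => (s ω, x ω, t ω)) := hs.prodMk (hx.prodMk ht)
  have hmain := stmt13_main hm1 hx hs ht hy hyexp rfl hsurr
  have hhint : Integrable (fun ω => h (s ω, x ω)) μexp := integrable_condExp.congr hAexp.symm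
  refine ae_eq_condExp_of_forall_setIntegral_eq hm3 hyexp
    (fun A _ _ => hhint.integrableOn) ?_ ?_
  · intro A hA _
    obtain ⟨B, hB, rfl⟩ := MeasurableSpace.measurableSet_comap.mp hA
    calc ∫ ω in (fun ω => (s ω, x ω, t ω)) ⁻¹' B, h (s ω, x ω) ∂μexp
        = ∫ ω in (fun ω => (s ω, x ω, t ω)) ⁻¹' B,
            (μexp[y | MeasurableSpace.comap (fun ω => (s ω, x ω)) inferInstance]) ω ∂μexp :=
          setIntegral_congr_ae (hmapm hB) (hAexp.mono fun ω hω _ => hω)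
      _ = ∫ ω in (fun ω => (s ω, x ω, t ω)) ⁻¹' B, y ω ∂μexp := hmain B hB
  · have hsx1 : Measurable[MeasurableSpace.comap (fun ω => (s ω, x ω)) inferInstance]
        fun ω => (s ω, x ω) := measurable_iff_comap_le.mpr le_rfl
    exact
      (((hh.comp hsx1).stronglyMeasurable).mono hm13).aestronglyMeasurable
end
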